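/- Let f : ℝ → ℝ satisfy |f(ξ)| > |ξ| for some ξ ∈ ℝ. Then there exists a 2×2 real symmetric positive definite matrix A such that the matrix f*[A], obtained from A by applying f to the off-diagonal entries and leaving the diagonal unchanged, is not positive semidefinite. -/

import Mathlib

/-- `f*[A]`: apply `f` to off-diagonal entries, leave diagonal unchanged. -/
def offDiagApply {n : ℕ} (f : ℝ → ℝ) (A : Matrix (Fin n) (Fin n) ℝ) :
    Matrix (Fin n) (Fin n) ℝ :=
  Matrix.of fun i j => if i = j then A i i else f (A i j)

theorem stmt_0 (f : ℝ → ℝ) (ξ : ℝ) (hξ : |f ξ| > |ξ|) :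
    ∃ A : Matrix (Fin 2) (Fin 2) ℝ, A.IsSymm ∧ A.PosDef ∧
      ¬ (offDiagApply f A).PosSemidef := by
  set c : ℝ := (|ξ| + |f ξ|) / 2 with hc
  have h1 : |ξ| < c := by rw [hc]; linarith
  have h2 : c < |f ξ| := by rw [hc]; linarith
  have hξc : -c < ξ ∧ ξ < c := abs_lt.mp h1
  refine ⟨!![c, ξ; ξ, c], ?_, ?_, ?_⟩
  · ext i j
    fin_cases i <;> fin_cases j <;> simp [Matrix.IsSymm]
  · refine Matrix.PosDef.of_dotProduct_mulVec_pos ?_ ?_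
    · ext i j
      fin_cases i <;> fin_cases j <;> simp [Matrix.IsHermitian]
    · intro x hx
      have h3 : 0 < c + ξ := by linarith [hξc.1]
      have h4 : 0 < c - ξ := by linarith [hξc.2]
      have h5 : x 0 + x 1 ≠ 0 ∨ x 0 - x 1 ≠ 0 := by
        by_contra h
        push_neg at h
        have e0 : x 0 = 0 := by linarith [h.1, h.2]
        have e1 : x 1 = 0 := by linarith [h.1, h.2]
        exact hx (by ext i; fin_cases i <;> simp [e0, e1])
      simp [Matrix.mulVec, dotProduct, Fin.sum_univ_two]
      rcases h5 with h | h
      · nlinarith [mul_pos h3 (sq_pos_of_ne_zero h), mul_nonneg h4.le (sq_nonneg (x 0 - x 1))]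
      · nlinarith [mul_pos h4 (sq_pos_of_ne_zero h), mul_nonneg h3.le (sq_nonneg (x 0 + x 1))]
  · intro hpsd
    have hM : offDiagApply f !![c, ξ; ξ, c] = !![c, f ξ; f ξ, c] := by
      ext i j
      fin_cases i <;> fin_cases j <;> simp [offDiagApply]
    rw [hM] at hpsd
    have ha := hpsd.dotProduct_mulVec_nonneg ![1, -1]
    have hb := hpsd.dotProduct_mulVec_nonneg ![1, 1]
    simp [Matrix.mulVec, dotProduct, Fin.sum_univ_two] at ha hb
    have habs : |f ξ| ≤ c := abs_le.mpr ⟨by linarith, ha⟩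
    linarith
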